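/- arXiv:cs/0410008 — 3 statements merged into one kernel-verified Lean document; each statement's English description precedes it below -/
import Mathlib

section
/- Let 𝒳 and 𝒳̂ be finite nonempty alphabets, let p be a probability mass function on 𝒳, and let d : 𝒳 × 𝒳̂ → ℝ be a nonnegative distortion measure. For D ≥ 0 define the (informational) rate-distortion function R(D) as the infimum of the mutual informations I[X;Q] over all pairs of random variables (X,Q) with values in 𝒳 × 𝒳̂ such that X has distribution p and E[d(X,Q)] ≤ D. Let X₁,…,Xₙ be i.i.d. with distribution p, let e : 𝒳ⁿ → Fin N be an encoder, and for each i ∈ {1,…,n} let gᵢ : Fin N × 𝒳^{i−1} → 𝒳̂ be a decoder; set M = e(X₁,…,Xₙ) and X̂ᵢ = gᵢ(M, X₁,…,X_{i−1}). If D̄ = (1/n) Σ_{i=1}^n E[d(Xᵢ, X̂ᵢ)], then (1/n) log N ≥ R(D̄). -/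
open MeasureTheory
open scoped ENNReal

/-- Shannon entropy (in nats) of a finitely-valued random variable `X` under the
measure `μ`: `H[X] = −Σ_s P[X = s] log P[X = s]`. -/
noncomputable def shannonEntropy {Ω S : Type*} [MeasurableSpace Ω] [Fintype S]
    (μ : Measure Ω) (X : Ω → S) : ℝ :=
  ∑ s : S, Real.negMulLog (μ (X ⁻¹' {s})).toReal

/-- Conditional Shannon entropy (in nats): `H[X | Y] = H[X, Y] − H[Y]`. -/
noncomputable def condEntropy {Ω S T : Type*} [MeasurableSpace Ω] [Fintype S] [Fintype T]
    (μ : Measure Ω) (X : Ω → S) (Y : Ω → T) : ℝ :=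
  shannonEntropy μ (fun ω => (X ω, Y ω)) - shannonEntropy μ Y

/-- Mutual information (in nats): `I[X ; Y] = H[X] − H[X | Y]`. -/
noncomputable def mutualInfo {Ω S T : Type*} [MeasurableSpace Ω] [Fintype S] [Fintype T]
    (μ : Measure Ω) (X : Ω → S) (Y : Ω → T) : ℝ :=
  shannonEntropy μ X - condEntropy μ X Y

/-- Conditional mutual information (in nats):
`I[X ; Y | Z] = H[X | Z] − H[X | Y, Z]`. -/
noncomputable def condMutualInfo {Ω S T U : Type*} [MeasurableSpace Ω] [Fintype S] [Fintype T] [Fintype U]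
    (μ : Measure Ω) (X : Ω → S) (Y : Ω → T) (Z : Ω → U) : ℝ :=
  condEntropy μ X Z - condEntropy μ X (fun ω => (Y ω, Z ω))

/-- The (informational) rate-distortion function: for a source pmf `p` on `𝒳`,
a distortion measure `d : 𝒳 × 𝒳' → ℝ`, and a distortion level `D`, `rdFun p d D`
is the infimum of the mutual informations `I[X ; Q]` over all pairs of random
variables `(X, Q)` (on any probability space) with values in `𝒳 × 𝒳'` such that
`X` has distribution `p` and `E[d(X, Q)] ≤ D` (the infimum of the empty set
being `⊤`). -/
noncomputable def rdFun {𝒳 𝒳' : Type} [Fintype 𝒳] [Fintype 𝒳']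
    (p : 𝒳 → ℝ) (d : 𝒳 → 𝒳' → ℝ) (D : ℝ) : ℝ≥0∞ :=
  sInf { r : ℝ≥0∞ | ∃ (Ω : Type) (_ : MeasurableSpace Ω) (μ : Measure Ω),
    IsProbabilityMeasure μ ∧ ∃ (X : Ω → 𝒳) (Q : Ω → 𝒳'),
      (∀ a, MeasurableSet (X ⁻¹' {a})) ∧ (∀ b, MeasurableSet (Q ⁻¹' {b})) ∧
      (∀ a, (μ (X ⁻¹' {a})).toReal = p a) ∧
      (∑ a : 𝒳, ∑ b : 𝒳', (μ (X ⁻¹' {a} ∩ Q ⁻¹' {b})).toReal * d a b) ≤ D ∧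
      r = ENNReal.ofReal (mutualInfo μ X Q) }


set_option linter.unusedSectionVars false
set_option linter.unusedVariables false

namespace FFAux

open Finset Real

variable {Ω S T U : Type} [Fintype Ω] [Fintype S] [Fintype T] [Fintype U]

open scoped Classical in
/-- pushforward of a weight function along a map -/
noncomputable def push (w : Ω → ℝ) (X : Ω → S) (s : S) : ℝ :=
  ∑ ω, if X ω = s then w ω else 0

/-- entropy of a weight function -/
noncomputable def ent {S : Type} [Fintype S] (q : S → ℝ) : ℝ := ∑ s, Real.negMulLog (q s)

omit [Fintype S] [Fintype T] [Fintype U] in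
lemma push_nonneg {w : Ω → ℝ} (hw : ∀ ω, 0 ≤ w ω) (X : Ω → S) (s : S) :
    0 ≤ push w X s := by
  classical
  refine Finset.sum_nonneg fun ω _ => ?_
  split <;> simp [hw ω]

omit [Fintype T] [Fintype U] in
lemma push_sum (w : Ω → ℝ) (X : Ω → S) : ∑ s, push w X s = ∑ ω, w ω := by
  classical
  unfold push
  rw [Finset.sum_comm]
  refine Finset.sum_congr rfl fun ω _ => ?_
  simp

omit [Fintype S] [Fintype T] [Fintype U] in
lemma push_id (w : Ω → ℝ) (s : Ω) : push w id s = w s := by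
  classical
  unfold push
  simp

omit [Fintype U] in
lemma ent_relabel {w : Ω → ℝ} (f : S → T) (hf : Function.Injective f) (X : Ω → S) :
    ent (push w (fun ω => f (X ω))) = ent (push w X) := by
  classical
  have h1 : ∀ s, push w (fun ω => f (X ω)) (f s) = push w X s := by
    intro s; unfold push
    refine Finset.sum_congr rfl fun ω _ => ?_
    simp [hf.eq_iff]
  have h2 : ∀ t, t ∉ Finset.univ.image f → push w (fun ω => f (X ω)) t = 0 := by
    intro t ht; unfold push
    refine Finset.sum_eq_zero fun ω _ => ?_
    rw [if_neg]
    intro h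
    exact ht (Finset.mem_image.2 ⟨X ω, Finset.mem_univ _, h⟩)
  unfold ent
  rw [← Finset.sum_subset (Finset.subset_univ (Finset.univ.image f))
    (fun t _ ht => by rw [h2 t ht, Real.negMulLog_zero])]
  rw [Finset.sum_image (fun a _ b _ h => hf h)]
  exact Finset.sum_congr rfl fun s _ => by rw [h1]

omit [Fintype U] in
lemma ent_relabel' {w : Ω → ℝ} (f : S → T) (hf : Function.Injective f) (X : Ω → S)
    (Y : Ω → T) (hXY : ∀ ω, Y ω = f (X ω)) :
    ent (push w Y) = ent (push w X) := by
  rw [show Y = fun ω => f (X ω) from funext hXY]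
  exact ent_relabel f hf X

lemma sum_rot3 {α β γ : Type} [Fintype α] [Fintype β] [Fintype γ] (f : α → β → γ → ℝ) :
    ∑ a, ∑ b, ∑ c, f a b c = ∑ c, ∑ a, ∑ b, f a b c := by
  calc ∑ a, ∑ b, ∑ c, f a b c = ∑ a, ∑ c, ∑ b, f a b c :=
        Finset.sum_congr rfl fun a _ => Finset.sum_comm
    _ = ∑ c, ∑ a, ∑ b, f a b c := Finset.sum_comm

lemma ent_submod_core (q : S → T → U → ℝ) (hq : ∀ s t u, 0 ≤ q s t u) :
    (∑ s, ∑ t, ∑ u, negMulLog (q s t u)) + ∑ u, negMulLog (∑ s, ∑ t, q s t u)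
      ≤ (∑ s, ∑ u, negMulLog (∑ t, q s t u)) + ∑ t, ∑ u, negMulLog (∑ s, q s t u) := by
  classical
  set A : S → U → ℝ := fun s u => ∑ t, q s t u with hA
  set B : T → U → ℝ := fun t u => ∑ s, q s t u with hB
  set C : U → ℝ := fun u => ∑ s, ∑ t, q s t u with hC
  have hA0 : ∀ s u, 0 ≤ A s u := fun s u => Finset.sum_nonneg fun t _ => hq s t u
  have hB0 : ∀ t u, 0 ≤ B t u := fun t u => Finset.sum_nonneg fun s _ => hq s t u
  have hC0 : ∀ u, 0 ≤ C u := fun u => Finset.sum_nonneg fun s _ => hA0 s u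
  have hqA : ∀ s t u, q s t u ≤ A s u := fun s t u =>
    Finset.single_le_sum (fun t _ => hq s t u) (mem_univ t)
  have hqB : ∀ s t u, q s t u ≤ B t u := fun s t u =>
    Finset.single_le_sum (fun s _ => hq s t u) (mem_univ s)
  have hqC : ∀ s t u, q s t u ≤ C u := fun s t u =>
    le_trans (hqA s t u) (Finset.single_le_sum (fun s _ => hA0 s u) (mem_univ s))
  have key : ∀ s t u,
      negMulLog (q s t u) - q s t u * log (C u) + q s t u * log (A s u) + q s t u * log (B t u)
        ≤ A s u * B t u / C u - q s t u := by
    intro s t u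
    rcases eq_or_lt_of_le (hq s t u) with h0 | h0
    · rw [← h0]
      simp only [negMulLog_zero, zero_mul, sub_zero, add_zero, zero_sub, neg_zero]
      exact div_nonneg (mul_nonneg (hA0 s u) (hB0 t u)) (hC0 u)
    · have hApos : 0 < A s u := lt_of_lt_of_le h0 (hqA s t u)
      have hBpos : 0 < B t u := lt_of_lt_of_le h0 (hqB s t u)
      have hCpos : 0 < C u := lt_of_lt_of_le h0 (hqC s t u)
      have hlog : log (A s u * B t u / (q s t u * C u)) ≤ A s u * B t u / (q s t u * C u) - 1 :=
        log_le_sub_one_of_pos (by positivity)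
      have hmul := mul_le_mul_of_nonneg_left hlog (le_of_lt h0)
      have hexp : log (A s u * B t u / (q s t u * C u))
          = log (A s u) + log (B t u) - log (q s t u) - log (C u) := by
        rw [Real.log_div (by positivity) (by positivity), Real.log_mul (ne_of_gt hApos)
          (ne_of_gt hBpos), Real.log_mul (ne_of_gt h0) (ne_of_gt hCpos)]
        ring
      rw [hexp] at hmul
      have hval : q s t u * (A s u * B t u / (q s t u * C u) - 1)
          = A s u * B t u / C u - q s t u := by
        field_simp
      rw [hval] at hmul
      calc negMulLog (q s t u) - q s t u * log (C u) + q s t u * log (A s u)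
            + q s t u * log (B t u)
          = q s t u * (log (A s u) + log (B t u) - log (q s t u) - log (C u)) := by
            rw [negMulLog]; ring
        _ ≤ _ := hmul
  have hCsum : ∑ s, ∑ t, ∑ u, q s t u = ∑ u, C u := by
    rw [sum_rot3]
  have hUsum : ∑ s, ∑ t, ∑ u, A s u * B t u / C u = ∑ u, C u := by
    rw [sum_rot3]
    refine Finset.sum_congr rfl fun u _ => ?_
    have inner : ∀ s, ∑ t, A s u * B t u / C u = A s u * (∑ t, B t u) / C u := by
      intro s
      rw [← Finset.sum_div, ← Finset.mul_sum]
    calc ∑ s, ∑ t, A s u * B t u / C u = ∑ s, A s u * (∑ t, B t u) / C u :=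
          Finset.sum_congr rfl fun s _ => inner s
      _ = (∑ s, A s u) * (∑ t, B t u) / C u := by rw [← Finset.sum_div, ← Finset.sum_mul]
      _ = C u * C u / C u := by
          congr 1
          · congr 1
            exact Finset.sum_comm
      _ = C u := by
          rcases eq_or_lt_of_le (hC0 u) with h | h
          · rw [← h]; simp
          · rw [mul_div_assoc, div_self (ne_of_gt h), mul_one]
  have bound : ∑ s, ∑ t, ∑ u, (negMulLog (q s t u) - q s t u * log (C u)
      + q s t u * log (A s u) + q s t u * log (B t u))
      ≤ ∑ s, ∑ t, ∑ u, (A s u * B t u / C u - q s t u) := by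
    refine Finset.sum_le_sum fun s _ => Finset.sum_le_sum fun t _ =>
      Finset.sum_le_sum fun u _ => key s t u
  have hsumU : ∑ s, ∑ t, ∑ u, (A s u * B t u / C u - q s t u) = 0 := by
    simp only [Finset.sum_sub_distrib]
    rw [hUsum, hCsum]
    ring
  have split : ∑ s, ∑ t, ∑ u, (negMulLog (q s t u) - q s t u * log (C u)
      + q s t u * log (A s u) + q s t u * log (B t u))
      = (∑ s, ∑ t, ∑ u, negMulLog (q s t u)) - (∑ s, ∑ t, ∑ u, q s t u * log (C u))
        + (∑ s, ∑ t, ∑ u, q s t u * log (A s u))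
        + (∑ s, ∑ t, ∑ u, q s t u * log (B t u)) := by
    simp only [Finset.sum_add_distrib, Finset.sum_sub_distrib]
  have E1 : ∑ u, negMulLog (C u) = -(∑ s, ∑ t, ∑ u, q s t u * log (C u)) := by
    rw [sum_rot3, ← Finset.sum_neg_distrib]
    refine Finset.sum_congr rfl fun u _ => ?_
    have : ∑ s, ∑ t, q s t u * log (C u) = C u * log (C u) := by
      rw [hC]
      rw [Finset.sum_mul]
      refine Finset.sum_congr rfl fun s _ => ?_
      rw [Finset.sum_mul]
    rw [this, negMulLog, neg_mul]
  have E2 : ∑ s, ∑ u, negMulLog (A s u) = -(∑ s, ∑ t, ∑ u, q s t u * log (A s u)) := by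
    have swap : ∑ s, ∑ t, ∑ u, q s t u * log (A s u) = ∑ s, ∑ u, ∑ t, q s t u * log (A s u) :=
      Finset.sum_congr rfl fun s _ => Finset.sum_comm
    rw [swap, ← Finset.sum_neg_distrib]
    refine Finset.sum_congr rfl fun s _ => ?_
    rw [← Finset.sum_neg_distrib]
    refine Finset.sum_congr rfl fun u _ => ?_
    rw [← Finset.sum_mul, negMulLog, neg_mul]
  have E3 : ∑ t, ∑ u, negMulLog (B t u) = -(∑ s, ∑ t, ∑ u, q s t u * log (B t u)) := by
    have rot : ∑ s, ∑ t, ∑ u, q s t u * log (B t u)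
        = ∑ t, ∑ u, ∑ s, q s t u * log (B t u) := by
      rw [Finset.sum_comm]
      refine Finset.sum_congr rfl fun t _ => Finset.sum_comm
    rw [rot, ← Finset.sum_neg_distrib]
    refine Finset.sum_congr rfl fun t _ => ?_
    rw [← Finset.sum_neg_distrib]
    refine Finset.sum_congr rfl fun u _ => ?_
    rw [← Finset.sum_mul, negMulLog, neg_mul]
  rw [split, hsumU] at bound
  linarith [bound]

lemma push_pair_margS (w : Ω → ℝ) (X : Ω → S) (Y : Ω → T) (t : T) :
    ∑ s, push w (fun ω => (X ω, Y ω)) (s, t) = push w Y t := by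
  classical
  unfold push
  rw [Finset.sum_comm]
  refine Finset.sum_congr rfl fun ω _ => ?_
  by_cases h : Y ω = t <;> simp [Prod.ext_iff, h]

lemma ent_submod {w : Ω → ℝ} (hw : ∀ ω, 0 ≤ w ω) (X : Ω → S) (Y : Ω → T) (Z : Ω → U) :
    ent (push w (fun ω => (X ω, Y ω, Z ω))) + ent (push w Z)
      ≤ ent (push w (fun ω => (X ω, Z ω))) + ent (push w (fun ω => (Y ω, Z ω))) := by
  classical
  set q : S → T → U → ℝ := fun s t u => push w (fun ω => (X ω, Y ω, Z ω)) (s, t, u) with hqdef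
  have hq0 : ∀ s t u, 0 ≤ q s t u := by
    intro s t u
    refine Finset.sum_nonneg fun ω _ => ?_
    split <;> simp [hw ω]
  have margT : ∀ s u, ∑ t, q s t u = push w (fun ω => (X ω, Z ω)) (s, u) := by
    intro s u
    rw [hqdef]
    unfold push
    rw [Finset.sum_comm]
    refine Finset.sum_congr rfl fun ω _ => ?_
    by_cases h1 : X ω = s <;> by_cases h2 : Z ω = u <;> simp [Prod.ext_iff, h1, h2]
  have margS : ∀ t u, ∑ s, q s t u = push w (fun ω => (Y ω, Z ω)) (t, u) := by
    intro t u
    rw [hqdef]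
    unfold push
    rw [Finset.sum_comm]
    refine Finset.sum_congr rfl fun ω _ => ?_
    by_cases h1 : Y ω = t <;> by_cases h2 : Z ω = u <;> simp [Prod.ext_iff, h1, h2]
  have margST : ∀ u, ∑ s, ∑ t, q s t u = push w Z u := by
    intro u
    calc ∑ s, ∑ t, q s t u = ∑ s, push w (fun ω => (X ω, Z ω)) (s, u) :=
          Finset.sum_congr rfl fun s _ => margT s u
      _ = push w Z u := push_pair_margS w X Z u
  have core := ent_submod_core q hq0
  have e1 : ent (push w (fun ω => (X ω, Y ω, Z ω))) = ∑ s, ∑ t, ∑ u, negMulLog (q s t u) := by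
    unfold ent
    rw [Fintype.sum_prod_type]
    exact Finset.sum_congr rfl fun s _ => Fintype.sum_prod_type ..
  have e2 : ent (push w Z) = ∑ u, negMulLog (∑ s, ∑ t, q s t u) := by
    unfold ent
    exact Finset.sum_congr rfl fun u _ => by rw [margST u]
  have e3 : ent (push w (fun ω => (X ω, Z ω))) = ∑ s, ∑ u, negMulLog (∑ t, q s t u) := by
    unfold ent
    rw [Fintype.sum_prod_type]
    refine Finset.sum_congr rfl fun s _ => Finset.sum_congr rfl fun u _ => by rw [margT s u]
  have e4 : ent (push w (fun ω => (Y ω, Z ω))) = ∑ t, ∑ u, negMulLog (∑ s, q s t u) := by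
    unfold ent
    rw [Fintype.sum_prod_type]
    refine Finset.sum_congr rfl fun t _ => Finset.sum_congr rfl fun u _ => by rw [margS t u]
  rw [e1, e2, e3, e4]
  exact core

/-- Data processing: conditioning on `Y` tells at least as much as on `f ∘ Y`. -/
lemma ent_dp' {w : Ω → ℝ} (hw : ∀ ω, 0 ≤ w ω) (X : Ω → S) (Y : Ω → T) (Z : Ω → U)
    (f : T → U) (hZ : ∀ ω, Z ω = f (Y ω)) :
    ent (push w (fun ω => (X ω, Y ω))) - ent (push w Y)
      ≤ ent (push w (fun ω => (X ω, Z ω))) - ent (push w Z) := by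
  have hZfun : Z = fun ω => f (Y ω) := funext hZ
  subst hZfun
  have h := ent_submod hw X Y (fun ω => f (Y ω))
  have r1 : ent (push w (fun ω => (X ω, Y ω, f (Y ω)))) = ent (push w (fun ω => (X ω, Y ω))) := by
    have := ent_relabel (w := w) (f := fun st : S × T => (st.1, st.2, f st.2))
      (fun a b hab => by
        simp only [Prod.mk.injEq] at hab
        exact Prod.ext hab.1 hab.2.1) (fun ω => (X ω, Y ω))
    exact this
  have r2 : ent (push w (fun ω => (Y ω, f (Y ω)))) = ent (push w Y) := by
    have := ent_relabel (w := w) (f := fun t : T => (t, f t))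
      (fun a b hab => by simp only [Prod.mk.injEq] at hab; exact hab.1) Y
    exact this
  rw [r1, r2] at h
  linarith

/-- Entropy is at most log of the cardinality. -/
lemma ent_le_log {N : ℕ} (hN : 0 < N) (q : Fin N → ℝ) (hq : ∀ m, 0 ≤ q m)
    (hq1 : ∑ m, q m = 1) : ent q ≤ Real.log N := by
  have hNpos : (0:ℝ) < N := by exact_mod_cast hN
  have key : ∀ m, negMulLog (q m) ≤ (N:ℝ)⁻¹ - q m + q m * Real.log N := by
    intro m
    rcases eq_or_lt_of_le (hq m) with h0 | h0
    · rw [← h0]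
      simp only [negMulLog_zero, zero_mul, sub_zero, add_zero]
      positivity
    · have hlog : log (((N:ℝ) * q m)⁻¹) ≤ ((N:ℝ) * q m)⁻¹ - 1 :=
        log_le_sub_one_of_pos (by positivity)
      have hmul := mul_le_mul_of_nonneg_left hlog (le_of_lt h0)
      have hexp : log (((N:ℝ) * q m)⁻¹) = -log N - log (q m) := by
        rw [Real.log_inv, Real.log_mul (ne_of_gt hNpos) (ne_of_gt h0)]
        ring
      rw [hexp] at hmul
      have hval : q m * (((N:ℝ) * q m)⁻¹ - 1) = (N:ℝ)⁻¹ - q m := by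
        field_simp
      rw [hval] at hmul
      have : negMulLog (q m) = q m * (-log N - log (q m)) + q m * log N := by
        rw [negMulLog]; ring
      rw [this]
      linarith
  calc ent q ≤ ∑ m, ((N:ℝ)⁻¹ - q m + q m * Real.log N) := Finset.sum_le_sum fun m _ => key m
    _ = (N:ℝ) * (N:ℝ)⁻¹ - 1 + 1 * Real.log N := by
        rw [Finset.sum_add_distrib, Finset.sum_sub_distrib, Finset.sum_const,
          Finset.card_univ, Fintype.card_fin, ← Finset.sum_mul, hq1]
        simp [nsmul_eq_mul]
    _ = Real.log N := by
        rw [mul_inv_cancel₀ (ne_of_gt hNpos)]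
        ring

lemma negMulLog_prod {ι : Type} [DecidableEq ι] (s : Finset ι) (f : ι → ℝ) :
    negMulLog (∏ i ∈ s, f i) = ∑ i ∈ s, (∏ j ∈ s.erase i, f j) * negMulLog (f i) := by
  induction s using Finset.induction_on with
  | empty => simp
  | @insert a s ha ih =>
    rw [Finset.prod_insert ha, negMulLog_mul, Finset.sum_insert ha, Finset.erase_insert ha, ih]
    rw [Finset.mul_sum]
    congr 1
    refine Finset.sum_congr rfl fun i hi => ?_
    have hia : i ≠ a := fun h => ha (h ▸ hi)
    rw [Finset.erase_insert_of_ne hia.symm,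
      Finset.prod_insert (fun h => ha (Finset.mem_of_mem_erase h))]
    ring

section ProductSource
variable {𝒳 : Type} [Fintype 𝒳] {n : ℕ} (p : 𝒳 → ℝ)

/-- mass of the product pmf on a coordinate cylinder -/
lemma prod_marginal (hp1 : ∑ a, p a = 1) (i : Fin n) (a : 𝒳) :
    push (fun x : Fin n → 𝒳 => ∏ j, p (x j)) (fun x => x i) a = p a := by
  classical
  unfold push
  set Q : Fin n → 𝒳 → ℝ := fun j b => if j = i then (if b = a then p b else 0) else p b with hQ
  have hterm : ∀ x : Fin n → 𝒳,
      (if x i = a then ∏ j, p (x j) else 0) = ∏ j, Q j (x j) := by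
    intro x
    by_cases h : x i = a
    · rw [if_pos h]
      refine Finset.prod_congr rfl fun j _ => ?_
      rw [hQ]
      by_cases hj : j = i
      · subst hj; simp [h]
      · simp [hj]
    · rw [if_neg h]
      refine (Finset.prod_eq_zero (Finset.mem_univ i) ?_).symm
      simp [hQ, h]
  rw [Finset.sum_congr rfl fun x _ => hterm x, ← Fintype.piFinset_univ, ← Finset.prod_univ_sum]
  have hfac : ∀ j : Fin n, (∑ b, Q j b) = if j = i then p a else 1 := by
    intro j
    by_cases hj : j = i
    · subst hj; simp [hQ, Finset.sum_ite_eq' Finset.univ a p]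
    · simp [hQ, hj, hp1]
  rw [Finset.prod_congr rfl fun j _ => hfac j]
  simp

/-- entropy of the product pmf is n times the per-letter entropy -/
lemma ent_prod_pmf (hp1 : ∑ a, p a = 1) :
    ∑ x : Fin n → 𝒳, negMulLog (∏ j, p (x j)) = (n : ℝ) * ent p := by
  classical
  have step1 : ∀ x : Fin n → 𝒳, negMulLog (∏ j, p (x j))
      = ∑ i, (∏ j ∈ Finset.univ.erase i, p (x j)) * negMulLog (p (x i)) := fun x =>
    negMulLog_prod Finset.univ (fun j => p (x j))
  rw [Finset.sum_congr rfl fun x _ => step1 x, Finset.sum_comm]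
  have inner : ∀ i : Fin n,
      ∑ x : Fin n → 𝒳, (∏ j ∈ Finset.univ.erase i, p (x j)) * negMulLog (p (x i)) = ent p := by
    intro i
    set R : Fin n → 𝒳 → ℝ := fun j b => if j = i then negMulLog (p b) else p b with hR
    have hterm : ∀ x : Fin n → 𝒳,
        (∏ j ∈ Finset.univ.erase i, p (x j)) * negMulLog (p (x i)) = ∏ j, R j (x j) := by
      intro x
      rw [← Finset.mul_prod_erase Finset.univ (fun j => R j (x j)) (Finset.mem_univ i)]
      have h1 : R i (x i) = negMulLog (p (x i)) := by simp [hR]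
      have h2 : ∏ j ∈ Finset.univ.erase i, R j (x j) = ∏ j ∈ Finset.univ.erase i, p (x j) := by
        refine Finset.prod_congr rfl fun j hj => ?_
        have : j ≠ i := Finset.ne_of_mem_erase hj
        simp [hR, this]
      rw [h1, h2]
      ring
    rw [Finset.sum_congr rfl fun x _ => hterm x, ← Fintype.piFinset_univ, ← Finset.prod_univ_sum]
    have hfac : ∀ j : Fin n, (∑ b, R j b) = if j = i then ent p else 1 := by
      intro j
      by_cases hj : j = i
      · subst hj; simp [hR, ent]
      · simp [hR, hj, hp1]
    rw [Finset.prod_congr rfl fun j _ => hfac j]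
    simp
  rw [Finset.sum_congr rfl fun i _ => inner i]
  simp [mul_comm]

lemma push_mix_fst {S : Type} [Fintype S] (hn : 0 < n) (w : (Fin n → 𝒳) → ℝ)
    (F : Fin n → (Fin n → 𝒳) → S) (s : S) :
    push (fun ω : Fin n × (Fin n → 𝒳) => (n:ℝ)⁻¹ * w ω.2) (fun ω => F ω.1 ω.2) s
      = (n:ℝ)⁻¹ * ∑ i, push w (F i) s := by
  classical
  unfold push
  rw [Fintype.sum_prod_type, Finset.mul_sum]
  refine Finset.sum_congr rfl fun i _ => ?_
  rw [Finset.mul_sum]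
  refine Finset.sum_congr rfl fun x _ => ?_
  by_cases h : F i x = s <;> simp [h]

/-- entropy of a J-mixture: `H(F_J, J) = (1/n) ∑ H(F_i) + log n`. -/
lemma ent_mix {S : Type} [Fintype S] (hn : 0 < n) (w : (Fin n → 𝒳) → ℝ)
    (hw1 : ∑ x, w x = 1) (F : Fin n → (Fin n → 𝒳) → S) :
    ent (push (fun ω : Fin n × (Fin n → 𝒳) => (n:ℝ)⁻¹ * w ω.2) (fun ω => (F ω.1 ω.2, ω.1)))
      = (n:ℝ)⁻¹ * ∑ i, ent (push w (F i)) + Real.log n := by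
  classical
  have hnR : (0:ℝ) < n := by exact_mod_cast hn
  have hpush : ∀ (s : S) (i : Fin n),
      push (fun ω : Fin n × (Fin n → 𝒳) => (n:ℝ)⁻¹ * w ω.2) (fun ω => (F ω.1 ω.2, ω.1)) (s, i)
        = (n:ℝ)⁻¹ * push w (F i) s := by
    intro s i
    unfold push
    rw [Fintype.sum_prod_type, Finset.mul_sum]
    rw [Finset.sum_eq_single i]
    · refine Finset.sum_congr rfl fun x _ => ?_
      by_cases h : F i x = s <;> simp [Prod.ext_iff, h]
    · intro j _ hj
      refine Finset.sum_eq_zero fun x _ => ?_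
      simp [Prod.ext_iff, hj]
    · intro h; exact absurd (Finset.mem_univ i) h
  unfold ent
  rw [Fintype.sum_prod_type]
  have hrow : ∀ s : S, ∑ i, negMulLog ((n:ℝ)⁻¹ * push w (F i) s)
      = ∑ i, (push w (F i) s * negMulLog ((n:ℝ)⁻¹) + (n:ℝ)⁻¹ * negMulLog (push w (F i) s)) :=
    fun s => Finset.sum_congr rfl fun i _ => by rw [negMulLog_mul]
  calc ∑ s, ∑ i, negMulLog (push (fun ω : Fin n × (Fin n → 𝒳) => (n:ℝ)⁻¹ * w ω.2)
        (fun ω => (F ω.1 ω.2, ω.1)) (s, i))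
      = ∑ s, ∑ i, (push w (F i) s * negMulLog ((n:ℝ)⁻¹)
          + (n:ℝ)⁻¹ * negMulLog (push w (F i) s)) := by
        refine Finset.sum_congr rfl fun s _ => ?_
        rw [← hrow s]
        exact Finset.sum_congr rfl fun i _ => by rw [hpush s i]
    _ = (∑ s, ∑ i, push w (F i) s * negMulLog ((n:ℝ)⁻¹))
        + ∑ s, ∑ i, (n:ℝ)⁻¹ * negMulLog (push w (F i) s) := by
        rw [← Finset.sum_add_distrib]
        exact Finset.sum_congr rfl fun s _ => Finset.sum_add_distrib
    _ = (n:ℝ) * negMulLog ((n:ℝ)⁻¹) + (n:ℝ)⁻¹ * ∑ i, ent (push w (F i)) := by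
        congr 1
        · rw [Finset.sum_comm]
          have : ∀ i : Fin n, ∑ s, push w (F i) s * negMulLog ((n:ℝ)⁻¹)
              = negMulLog ((n:ℝ)⁻¹) := by
            intro i
            rw [← Finset.sum_mul, push_sum, hw1, one_mul]
          rw [Finset.sum_congr rfl fun i _ => this i]
          simp [nsmul_eq_mul]
        · rw [Finset.sum_comm, Finset.mul_sum]
          refine Finset.sum_congr rfl fun i _ => ?_
          rw [ent, Finset.mul_sum]
    _ = (n:ℝ)⁻¹ * ∑ i, ent (push w (F i)) + Real.log n := by
        have : (n:ℝ) * negMulLog ((n:ℝ)⁻¹) = Real.log n := by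
          rw [negMulLog, Real.log_inv]
          field_simp
        rw [this]
        ring
end ProductSource

end FFAux

/-- prefix of length `k` of a length-`n` string (junk beyond `n`) -/
def ffPre {𝒳 : Type} {n : ℕ} (hn : 0 < n) (k : ℕ) (x : Fin n → 𝒳) : Fin k → 𝒳 :=
  fun j => if h : (j : ℕ) < n then x ⟨(j : ℕ), h⟩ else x ⟨0, hn⟩


namespace FFAux

open MeasureTheory Finset Real
open scoped ENNReal

variable {Ω S : Type} [Fintype Ω] [Fintype S]

noncomputable def ffMeasure [MeasurableSpace Ω] (w : Ω → ℝ) : Measure Ω :=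
  Measure.sum (fun ω => (ENNReal.ofReal (w ω)) • Measure.dirac ω)

open scoped Classical in
lemma ffMeasure_apply [MeasurableSpace Ω] (hms : ∀ A : Set Ω, MeasurableSet A)
    {w : Ω → ℝ} (hw : ∀ ω, 0 ≤ w ω) (A : Set Ω) :
    ffMeasure w A = ENNReal.ofReal (∑ ω, if ω ∈ A then w ω else 0) := by
  rw [ffMeasure, Measure.sum_apply _ (hms A), tsum_fintype]
  rw [ENNReal.ofReal_sum_of_nonneg (fun ω _ => by split <;> simp [hw ω])]
  refine Finset.sum_congr rfl fun ω _ => ?_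
  rw [Measure.smul_apply, Measure.dirac_apply' _ (hms A), smul_eq_mul]
  by_cases h : ω ∈ A
  · simp [Set.indicator_of_mem h, h]
  · simp [Set.indicator_of_notMem h, h]

open scoped Classical in
lemma ffMeasure_real [MeasurableSpace Ω] (hms : ∀ A : Set Ω, MeasurableSet A)
    {w : Ω → ℝ} (hw : ∀ ω, 0 ≤ w ω) (A : Set Ω) :
    (ffMeasure w A).toReal = ∑ ω, if ω ∈ A then w ω else 0 := by
  rw [ffMeasure_apply hms hw A, ENNReal.toReal_ofReal]
  exact Finset.sum_nonneg fun ω _ => by split <;> simp [hw ω]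

lemma ffMeasure_prob [MeasurableSpace Ω] (hms : ∀ A : Set Ω, MeasurableSet A)
    {w : Ω → ℝ} (hw : ∀ ω, 0 ≤ w ω) (hw1 : ∑ ω, w ω = 1) :
    IsProbabilityMeasure (ffMeasure w) := by
  constructor
  rw [ffMeasure_apply hms hw Set.univ]
  simp [hw1]

lemma shannon_ffMeasure [MeasurableSpace Ω] (hms : ∀ A : Set Ω, MeasurableSet A)
    {w : Ω → ℝ} (hw : ∀ ω, 0 ≤ w ω) (X : Ω → S) :
    shannonEntropy (ffMeasure w) X = ent (push w X) := by
  classical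
  unfold shannonEntropy ent
  refine Finset.sum_congr rfl fun s _ => ?_
  congr 1
  rw [ffMeasure_real hms hw]
  simp [push, Set.mem_preimage]

lemma ffMeasure_preimage_real [MeasurableSpace Ω] (hms : ∀ A : Set Ω, MeasurableSet A)
    {w : Ω → ℝ} (hw : ∀ ω, 0 ≤ w ω) (X : Ω → S) (s : S) :
    ((ffMeasure w) (X ⁻¹' {s})).toReal = push w X s := by
  classical
  rw [ffMeasure_real hms hw]
  simp [push, Set.mem_preimage]

end FFAux

set_option maxHeartbeats 1000000

/-- Converse for source coding with unit-lag feedforward side information: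
for an i.i.d. source `X₁,…,Xₙ` with per-letter pmf `p`, an encoder `e` into
`Fin N`, and decoders `gᵢ` which see the message `M = e(X₁,…,Xₙ)` together with
the first `i − 1` source samples and produce `X̂ᵢ = gᵢ(M, X₁,…,X_{i−1})`, the
rate satisfies `(1/n)·log N ≥ R(D̄)` where
`D̄ = (1/n)·Σᵢ E[d(Xᵢ, X̂ᵢ)]` is the average distortion. -/
theorem feedforward_rate_distortion_converse
    {𝒳 𝒳' : Type} [Fintype 𝒳] [Fintype 𝒳'] [Nonempty 𝒳] [Nonempty 𝒳']
    (p : 𝒳 → ℝ) (hp0 : ∀ a, 0 ≤ p a) (hp1 : ∑ a, p a = 1)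
    (d : 𝒳 → 𝒳' → ℝ) (hd : ∀ a b, 0 ≤ d a b)
    {Ω : Type} [MeasurableSpace Ω] (μ : Measure Ω) [IsProbabilityMeasure μ]
    (n N : ℕ) (hn : 0 < n)
    (X : Fin n → Ω → 𝒳)
    (hXmeas : ∀ i a, MeasurableSet ((X i) ⁻¹' {a}))
    (hiid : ∀ x : Fin n → 𝒳,
      (μ {ω | ∀ i, X i ω = x i}).toReal = ∏ i, p (x i))
    (e : (Fin n → 𝒳) → Fin N)
    (g : (i : Fin n) → Fin N → (Fin i.val → 𝒳) → 𝒳')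
    (Xhat : Fin n → Ω → 𝒳')
    (hXhat : ∀ i ω, Xhat i ω =
      g i (e (fun j => X j ω)) (fun j => X ⟨j.val, j.isLt.trans i.isLt⟩ ω))
    (Dbar : ℝ)
    (hDbar : Dbar = (1 / n : ℝ) * ∑ i : Fin n, ∑ a : 𝒳, ∑ b : 𝒳',
      (μ {ω | X i ω = a ∧ Xhat i ω = b}).toReal * d a b) :
    rdFun p d Dbar ≤ ENNReal.ofReal ((1 / n : ℝ) * Real.log N) := by
  classical
  have hnR : (0:ℝ) < n := by exact_mod_cast hn
  have hN : 0 < N := Fin.pos (e (fun _ => Classical.arbitrary 𝒳))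
  -- block pmf and canonical decoders
  set w : (Fin n → 𝒳) → ℝ := fun x => ∏ j, p (x j) with hwdef
  have hw0 : ∀ x, 0 ≤ w x := fun x => Finset.prod_nonneg fun j _ => hp0 _
  have hw1 : ∑ x, w x = 1 := by
    show ∑ x : Fin n → 𝒳, ∏ j, p (x j) = 1
    rw [← Fintype.piFinset_univ, ← Finset.prod_univ_sum]
    simp [hp1]
  set dec : Fin n → (Fin n → 𝒳) → 𝒳' :=
    fun i x => g i (e x) (fun j => x ⟨j.val, j.isLt.trans i.isLt⟩) with hdecdef
  set w₀ : Fin n × (Fin n → 𝒳) → ℝ := fun ω => (n:ℝ)⁻¹ * w ω.2 with hw₀def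
  have hw₀0 : ∀ ω, 0 ≤ w₀ ω := fun ω => mul_nonneg (by positivity) (hw0 _)
  have hw₀1 : ∑ ω, w₀ ω = 1 := by
    rw [Fintype.sum_prod_type]
    have hrow : ∀ i : Fin n, ∑ x : Fin n → 𝒳, w₀ (i, x) = (n:ℝ)⁻¹ := by
      intro i
      show ∑ x : Fin n → 𝒳, (n:ℝ)⁻¹ * w x = (n:ℝ)⁻¹
      rw [← Finset.mul_sum, hw1, mul_one]
    rw [Finset.sum_congr rfl fun i _ => hrow i, Finset.sum_const, Finset.card_univ,
      Fintype.card_fin, nsmul_eq_mul, mul_inv_cancel₀ (ne_of_gt hnR)]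
  letI : MeasurableSpace (Fin n × (Fin n → 𝒳)) := ⊤
  have hms : ∀ A : Set (Fin n × (Fin n → 𝒳)), MeasurableSet A := fun A => trivial
  set Xi : Fin n × (Fin n → 𝒳) → 𝒳 := fun ω => ω.2 ω.1 with hXidef
  set Qi : Fin n × (Fin n → 𝒳) → 𝒳' := fun ω => dec ω.1 ω.2 with hQidef
  set J : Fin n × (Fin n → 𝒳) → Fin n := fun ω => ω.1 with hJdef
  have hprob : IsProbabilityMeasure (FFAux.ffMeasure w₀) := FFAux.ffMeasure_prob hms hw₀0 hw₀1
  -- marginal of Xi is p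
  have hXival : ∀ a, FFAux.push w₀ Xi a = p a := by
    intro a
    have h1 : FFAux.push w₀ Xi a = (n:ℝ)⁻¹ * ∑ i, FFAux.push w (fun x => x i) a :=
      FFAux.push_mix_fst hn w (fun i x => x i) a
    have h2 : ∀ i : Fin n, FFAux.push w (fun x => x i) a = p a :=
      fun i => FFAux.prod_marginal p hp1 i a
    rw [h1, Finset.sum_congr rfl fun i _ => h2 i, Finset.sum_const, Finset.card_univ,
      Fintype.card_fin, nsmul_eq_mul, ← mul_assoc, inv_mul_cancel₀ (ne_of_gt hnR), one_mul]
  have hmarg : ∀ a, ((FFAux.ffMeasure w₀) (Xi ⁻¹' {a})).toReal = p a := by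
    intro a
    rw [FFAux.ffMeasure_preimage_real hms hw₀0 Xi a, hXival a]
  -- joint law of (X i, Xhat i) under μ matches the canonical one
  have hjoint : ∀ (i : Fin n) (a : 𝒳) (b : 𝒳'),
      (μ {ω | X i ω = a ∧ Xhat i ω = b}).toReal
        = ∑ x : Fin n → 𝒳, (if x i = a ∧ dec i x = b then w x else 0) := by
    intro i a b
    have hXhat' : ∀ ω, Xhat i ω = dec i (fun j => X j ω) := fun ω => hXhat i ω
    have hSmeas : ∀ x : Fin n → 𝒳, MeasurableSet {ω | ∀ j, X j ω = x j} := by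
      intro x
      have hset : {ω | ∀ j, X j ω = x j} = ⋂ j, (X j) ⁻¹' {x j} := by
        ext ω; simp [Set.mem_iInter]
      rw [hset]
      exact MeasurableSet.iInter fun j => hXmeas j (x j)
    have hdecomp : {ω | X i ω = a ∧ Xhat i ω = b}
        = ⋃ x ∈ (Finset.univ.filter (fun x : Fin n → 𝒳 => x i = a ∧ dec i x = b)),
            {ω | ∀ j, X j ω = x j} := by
      ext ω
      simp only [Set.mem_setOf_eq, Set.mem_iUnion, Finset.mem_filter, Finset.mem_univ, true_and]
      constructor
      · rintro ⟨h1, h2⟩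
        exact ⟨fun j => X j ω, ⟨h1, by rw [← hXhat' ω]; exact h2⟩, fun j => rfl⟩
      · rintro ⟨x, ⟨hx1, hx2⟩, hx3⟩
        have hxeq : (fun j => X j ω) = x := funext hx3
        refine ⟨?_, ?_⟩
        · rw [hx3 i]; exact hx1
        · rw [hXhat' ω, hxeq]; exact hx2
    have hdisj : Set.PairwiseDisjoint
        (↑(Finset.univ.filter (fun x : Fin n → 𝒳 => x i = a ∧ dec i x = b)))
        (fun x : Fin n → 𝒳 => {ω | ∀ j, X j ω = x j}) := by
      intro x _ y _ hxy
      rw [Function.onFun, Set.disjoint_left]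
      intro ω h1 h2
      exact hxy (funext fun j => ((h1 j).symm.trans (h2 j)))
    rw [hdecomp, measure_biUnion_finset hdisj (fun x _ => hSmeas x),
      ENNReal.toReal_sum (fun x _ => measure_ne_top μ _), Finset.sum_filter]
    refine Finset.sum_congr rfl fun x _ => ?_
    split
    · exact hiid x
    · rfl
  -- distortion of the canonical pair equals Dbar
  have hdistEq : (∑ a : 𝒳, ∑ b : 𝒳',
      ((FFAux.ffMeasure w₀) (Xi ⁻¹' {a} ∩ Qi ⁻¹' {b})).toReal * d a b) = Dbar := by
    have hint : ∀ (a : 𝒳) (b : 𝒳'), ((FFAux.ffMeasure w₀) (Xi ⁻¹' {a} ∩ Qi ⁻¹' {b})).toReal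
        = (n:ℝ)⁻¹ * ∑ i, (μ {ω | X i ω = a ∧ Xhat i ω = b}).toReal := by
      intro a b
      rw [FFAux.ffMeasure_real hms hw₀0, Fintype.sum_prod_type, Finset.mul_sum]
      refine Finset.sum_congr rfl fun i _ => ?_
      rw [hjoint i a b, Finset.mul_sum]
      refine Finset.sum_congr rfl fun x _ => ?_
      by_cases h : x i = a ∧ dec i x = b
      · rw [if_pos, if_pos h]
        exact ⟨h.1, h.2⟩
      · rw [if_neg, if_neg h, mul_zero]
        intro hc
        exact h ⟨hc.1, hc.2⟩
    rw [hDbar]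
    rw [Finset.sum_congr rfl fun a (_ : a ∈ Finset.univ) =>
      Finset.sum_congr rfl fun b (_ : b ∈ Finset.univ) => by rw [hint a b]]
    have hterm : ∀ (a : 𝒳) (b : 𝒳'),
        ((n:ℝ)⁻¹ * ∑ i, (μ {ω | X i ω = a ∧ Xhat i ω = b}).toReal) * d a b
          = ∑ i, (n:ℝ)⁻¹ * ((μ {ω | X i ω = a ∧ Xhat i ω = b}).toReal * d a b) := by
      intro a b
      rw [mul_assoc, Finset.sum_mul, Finset.mul_sum]
    rw [Finset.sum_congr rfl fun a (_ : a ∈ Finset.univ) =>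
      Finset.sum_congr rfl fun b (_ : b ∈ Finset.univ) => hterm a b]
    rw [FFAux.sum_rot3 (fun a b i => (n:ℝ)⁻¹ * ((μ {ω | X i ω = a ∧ Xhat i ω = b}).toReal * d a b))]
    rw [one_div]
    rw [Finset.mul_sum]
    refine Finset.sum_congr rfl fun i _ => ?_
    rw [Finset.mul_sum]
    refine Finset.sum_congr rfl fun a _ => ?_
    rw [Finset.mul_sum]
  -- ===== main entropy chain =====
  have hMIeq : mutualInfo (FFAux.ffMeasure w₀) Xi Qi
      = FFAux.ent (FFAux.push w₀ Xi) + FFAux.ent (FFAux.push w₀ Qi)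
        - FFAux.ent (FFAux.push w₀ (fun ω => (Xi ω, Qi ω))) := by
    unfold mutualInfo condEntropy
    rw [FFAux.shannon_ffMeasure hms hw₀0 Xi, FFAux.shannon_ffMeasure hms hw₀0 Qi,
      FFAux.shannon_ffMeasure hms hw₀0 (fun ω => (Xi ω, Qi ω))]
    ring
  have hsub : FFAux.ent (FFAux.push w₀ (fun ω => (Xi ω, J ω, Qi ω)))
        + FFAux.ent (FFAux.push w₀ Qi)
      ≤ FFAux.ent (FFAux.push w₀ (fun ω => (Xi ω, Qi ω)))
        + FFAux.ent (FFAux.push w₀ (fun ω => (J ω, Qi ω))) :=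
    FFAux.ent_submod hw₀0 Xi J Qi
  have hrel1 : FFAux.ent (FFAux.push w₀ (fun ω => (Xi ω, J ω, Qi ω)))
      = FFAux.ent (FFAux.push w₀ (fun ω => ((Xi ω, Qi ω), J ω))) := by
    refine (FFAux.ent_relabel' (f := fun z : (𝒳 × 𝒳') × Fin n => (z.1.1, (z.2, z.1.2)))
      ?_ (fun ω => ((Xi ω, Qi ω), J ω)) (fun ω => (Xi ω, J ω, Qi ω)) (fun ω => rfl))
    intro z z' hz
    simp only [Prod.mk.injEq] at hz
    exact Prod.ext (Prod.ext hz.1 hz.2.2) hz.2.1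
  have hmix1 : FFAux.ent (FFAux.push w₀ (fun ω => ((Xi ω, Qi ω), J ω)))
      = (n:ℝ)⁻¹ * ∑ i, FFAux.ent (FFAux.push w (fun x => (x i, dec i x))) + Real.log n :=
    FFAux.ent_mix hn w hw1 (fun i x => (x i, dec i x))
  have hrel2 : FFAux.ent (FFAux.push w₀ (fun ω => (J ω, Qi ω)))
      = FFAux.ent (FFAux.push w₀ (fun ω => (Qi ω, J ω))) := by
    refine FFAux.ent_relabel' (f := fun z : 𝒳' × Fin n => (z.2, z.1)) ?_
      (fun ω => (Qi ω, J ω)) (fun ω => (J ω, Qi ω)) (fun ω => rfl)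
    intro z z' hz
    simp only [Prod.mk.injEq] at hz
    exact Prod.ext hz.2 hz.1
  have hmix2 : FFAux.ent (FFAux.push w₀ (fun ω => (Qi ω, J ω)))
      = (n:ℝ)⁻¹ * ∑ i, FFAux.ent (FFAux.push w (fun x => dec i x)) + Real.log n :=
    FFAux.ent_mix hn w hw1 (fun i x => dec i x)
  have hA2 : FFAux.ent (FFAux.push w₀ Xi) = FFAux.ent p := by
    unfold FFAux.ent
    exact Finset.sum_congr rfl fun a _ => by rw [hXival a]
  -- the per-letter chain on the source space
  set hfun : ℕ → ℝ := fun k => FFAux.ent (FFAux.push w (fun x => (e x, ffPre hn k x)))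
    with hfundef
  have hstep : ∀ i : Fin n,
      FFAux.ent (FFAux.push w (fun x => dec i x))
        - FFAux.ent (FFAux.push w (fun x => (x i, dec i x)))
      ≤ hfun (i : ℕ) - hfun ((i : ℕ) + 1) := by
    intro i
    have hZ : ∀ x : Fin n → 𝒳,
        dec i x = (fun mv : Fin N × (Fin (i : ℕ) → 𝒳) => g i mv.1 mv.2)
          ((e x, ffPre hn (i : ℕ) x)) := by
      intro x
      show g i (e x) (fun j => x ⟨j.val, j.isLt.trans i.isLt⟩) = g i (e x) (ffPre hn (i : ℕ) x)
      congr 1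
      funext j
      simp only [ffPre]
      rw [dif_pos (j.isLt.trans i.isLt)]
    have hdp : FFAux.ent (FFAux.push w (fun x => (x i, (e x, ffPre hn (i : ℕ) x))))
        - FFAux.ent (FFAux.push w (fun x => (e x, ffPre hn (i : ℕ) x)))
        ≤ FFAux.ent (FFAux.push w (fun x => (x i, dec i x)))
          - FFAux.ent (FFAux.push w (fun x => dec i x)) :=
      FFAux.ent_dp' hw0 (fun x => x i) (fun x => (e x, ffPre hn (i : ℕ) x))
        (fun x => dec i x) (fun mv => g i mv.1 mv.2) hZ
    have hch : FFAux.ent (FFAux.push w (fun x => (x i, (e x, ffPre hn (i : ℕ) x))))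
        = hfun ((i : ℕ) + 1) := by
      have hψinj : Function.Injective
          (fun z : 𝒳 × (Fin N × (Fin (i : ℕ) → 𝒳)) =>
            ((z.2.1, fun j : Fin ((i : ℕ) + 1) =>
              if h : (j : ℕ) < (i : ℕ) then z.2.2 ⟨(j : ℕ), h⟩ else z.1)
              : Fin N × (Fin ((i : ℕ) + 1) → 𝒳))) := by
        intro z z' hz
        simp only [Prod.mk.injEq] at hz
        obtain ⟨h1, h2⟩ := hz
        have h3 : z.1 = z'.1 := by
          have := congrFun h2 ⟨(i : ℕ), Nat.lt_succ_self _⟩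
          simpa using this
        have h4 : z.2.2 = z'.2.2 := by
          funext j
          have := congrFun h2 ⟨(j : ℕ), Nat.lt_succ_of_lt j.isLt⟩
          simpa [j.isLt] using this
        exact Prod.ext h3 (Prod.ext h1 h4)
      refine (FFAux.ent_relabel' _ hψinj
        (fun x => (x i, (e x, ffPre hn (i : ℕ) x)))
        (fun x => (e x, ffPre hn ((i : ℕ) + 1) x)) ?_).symm
      intro x
      refine Prod.ext rfl ?_
      funext j
      show ffPre hn ((i : ℕ) + 1) x j = _
      by_cases h : (j : ℕ) < (i : ℕ)
      · have hjn : (j : ℕ) < n := h.trans i.isLt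
        simp [ffPre, h, hjn]
      · have hji : (j : ℕ) = (i : ℕ) := by
          have := j.isLt
          omega
        have hjn : (j : ℕ) < n := by
          have := i.isLt
          omega
        simp only [ffPre]
        rw [dif_pos hjn, dif_neg h]
        congr 1
        exact Fin.ext hji
    linarith [hdp, hch]
  have hH0 : hfun 0 = FFAux.ent (FFAux.push w e) := by
    refine FFAux.ent_relabel'
      (f := fun m : Fin N => ((m, fun j : Fin 0 => j.elim0) : Fin N × (Fin 0 → 𝒳))) ?_ e
      (fun x => (e x, ffPre hn 0 x)) ?_
    · intro a b hab
      simpa using congrArg Prod.fst hab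
    · intro x
      refine Prod.ext rfl ?_
      funext j
      exact j.elim0
  have hHn : hfun n = (n:ℝ) * FFAux.ent p := by
    have h1 : hfun n = FFAux.ent (FFAux.push w (@id (Fin n → 𝒳))) := by
      refine FFAux.ent_relabel' (f := fun v : Fin n → 𝒳 => (e v, v)) ?_ id
        (fun x => (e x, ffPre hn n x)) ?_
      · intro a b hab
        exact congrArg Prod.snd hab
      · intro x
        refine Prod.ext rfl ?_
        funext j
        show ffPre hn n x j = x j
        simp only [ffPre]
        rw [dif_pos j.isLt]
    have h2 : FFAux.ent (FFAux.push w (@id (Fin n → 𝒳))) = ∑ x, Real.negMulLog (w x) := by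
      unfold FFAux.ent
      exact Finset.sum_congr rfl fun x _ => by rw [FFAux.push_id]
    have h3 : (∑ x : Fin n → 𝒳, Real.negMulLog (w x)) = (n:ℝ) * FFAux.ent p :=
      FFAux.ent_prod_pmf p hp1
    rw [h1, h2, h3]
  have htel : ∑ i : Fin n, (hfun (i : ℕ) - hfun ((i : ℕ) + 1)) = hfun 0 - hfun n := by
    rw [Fin.sum_univ_eq_sum_range (fun k => hfun k - hfun (k + 1)) n]
    exact Finset.sum_range_sub' hfun n
  have hsumstep : (∑ i, FFAux.ent (FFAux.push w (fun x => dec i x)))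
      - (∑ i, FFAux.ent (FFAux.push w (fun x => (x i, dec i x)))) ≤ hfun 0 - hfun n := by
    rw [← Finset.sum_sub_distrib, ← htel]
    exact Finset.sum_le_sum fun i _ => hstep i
  have hM : FFAux.ent (FFAux.push w e) ≤ Real.log N :=
    FFAux.ent_le_log hN (FFAux.push w e) (FFAux.push_nonneg hw0 e)
      (by rw [FFAux.push_sum, hw1])
  -- assemble the bound on the mutual information
  have hMI : mutualInfo (FFAux.ffMeasure w₀) Xi Qi ≤ (n:ℝ)⁻¹ * Real.log N := by
    have k1 : mutualInfo (FFAux.ffMeasure w₀) Xi Qi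
        ≤ FFAux.ent (FFAux.push w₀ Xi) + FFAux.ent (FFAux.push w₀ (fun ω => (J ω, Qi ω)))
          - FFAux.ent (FFAux.push w₀ (fun ω => (Xi ω, J ω, Qi ω))) := by
      rw [hMIeq]
      linarith [hsub]
    have k2 : FFAux.ent (FFAux.push w₀ Xi) + FFAux.ent (FFAux.push w₀ (fun ω => (J ω, Qi ω)))
          - FFAux.ent (FFAux.push w₀ (fun ω => (Xi ω, J ω, Qi ω)))
        = FFAux.ent p + (n:ℝ)⁻¹ * (∑ i, FFAux.ent (FFAux.push w (fun x => dec i x)))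
          - (n:ℝ)⁻¹ * (∑ i, FFAux.ent (FFAux.push w (fun x => (x i, dec i x)))) := by
      rw [hA2, hrel2, hmix2, hrel1, hmix1]
      ring
    have k3 : (n:ℝ)⁻¹ * (∑ i, FFAux.ent (FFAux.push w (fun x => dec i x)))
          - (n:ℝ)⁻¹ * (∑ i, FFAux.ent (FFAux.push w (fun x => (x i, dec i x))))
        ≤ (n:ℝ)⁻¹ * (hfun 0 - hfun n) := by
      rw [← mul_sub]
      exact mul_le_mul_of_nonneg_left hsumstep (by positivity)
    have k4 : FFAux.ent p + (n:ℝ)⁻¹ * (hfun 0 - hfun n) ≤ (n:ℝ)⁻¹ * Real.log N := by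
      rw [hH0, hHn]
      have hc : (n:ℝ)⁻¹ * ((n:ℝ) * FFAux.ent p) = FFAux.ent p := by
        field_simp
      have hM' : (n:ℝ)⁻¹ * FFAux.ent (FFAux.push w e) ≤ (n:ℝ)⁻¹ * Real.log N :=
        mul_le_mul_of_nonneg_left hM (by positivity)
      rw [mul_sub]
      linarith [hM', hc]
    linarith [k1, k2, k3, k4]
  -- conclude via the definition of rdFun
  have hmem : ENNReal.ofReal (mutualInfo (FFAux.ffMeasure w₀) Xi Qi)
      ∈ { r : ℝ≥0∞ | ∃ (Ω₀ : Type) (_ : MeasurableSpace Ω₀) (μ₀ : Measure Ω₀),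
        IsProbabilityMeasure μ₀ ∧ ∃ (X₀ : Ω₀ → 𝒳) (Q₀ : Ω₀ → 𝒳'),
          (∀ a, MeasurableSet (X₀ ⁻¹' {a})) ∧ (∀ b, MeasurableSet (Q₀ ⁻¹' {b})) ∧
          (∀ a, (μ₀ (X₀ ⁻¹' {a})).toReal = p a) ∧
          (∑ a : 𝒳, ∑ b : 𝒳', (μ₀ (X₀ ⁻¹' {a} ∩ Q₀ ⁻¹' {b})).toReal * d a b) ≤ Dbar ∧
          r = ENNReal.ofReal (mutualInfo μ₀ X₀ Q₀) } := by
    refine ⟨Fin n × (Fin n → 𝒳), ‹MeasurableSpace (Fin n × (Fin n → 𝒳))›,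
      FFAux.ffMeasure w₀, ?_, Xi, Qi, ?_, ?_, ?_, ?_, ?_⟩
    · exact hprob
    · exact fun a => hms _
    · exact fun b => hms _
    · exact hmarg
    · exact le_of_eq hdistEq
    · exact rfl
  refine le_trans (sInf_le hmem) (ENNReal.ofReal_le_ofReal ?_)
  rw [one_div]
  exact hMI
end

section
/- Fix n ≥ e ≥ 0. Consider the erasure alphabet 𝒜 = {0, 1, *}. Suppose there are an encoder enc : 𝒜ⁿ → Fin K and decoders gᵢ : Fin K × 𝒜^{i−1} → {0,1} (i = 1,…,n) such that for every sequence x ∈ 𝒜ⁿ containing exactly e symbols equal to *, setting m = enc(x) and x̂ᵢ = gᵢ(m, x₁,…,x_{i−1}), one has x̂ᵢ = xᵢ for every index i with xᵢ ≠ *. Then K ≥ 2^{n−e}. -/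
lemma card_filter_val_lt (n m : ℕ) (h : m ≤ n) :
    ((Finset.univ : Finset (Fin n)).filter (fun i => i.val < m)).card = m := by
  rw [← Finset.card_range m]
  apply Finset.card_bij (fun i _ => i.val)
  · intro a ha; simp at ha ⊢; exact ha
  · intro a ha b hb hab; exact Fin.ext hab
  · intro k hk
    simp at hk
    exact ⟨⟨k, lt_of_lt_of_le hk h⟩, by simp [hk], rfl⟩

/-- Converse for binary erasure quantization with unit-lag feedforward:
if an encoder `enc` into `Fin K` together with causal decoders `g i` (which see
the message and the true first `i − 1` source samples) reconstructs every
non-erased sample exactly, for every source sequence in `{0,1,*}ⁿ`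
(modeled as `Option Bool`, with `none` playing the role of `*`) having exactly
`e` erasures, then `K ≥ 2^(n − e)`. -/
theorem beq_feedforward_converse
    (n e : ℕ) (he : e ≤ n) (K : ℕ)
    (enc : (Fin n → Option Bool) → Fin K)
    (g : (i : Fin n) → Fin K → (Fin i.val → Option Bool) → Bool)
    (hzero : ∀ x : Fin n → Option Bool,
      (Finset.univ.filter (fun i => x i = none)).card = e →
      ∀ i : Fin n, ∀ b : Bool, x i = some b →
        g i (enc x) (fun j => x ⟨j.val, j.isLt.trans i.isLt⟩) = b) :
    2 ^ (n - e) ≤ K := by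
  classical
  set X : (Fin (n - e) → Bool) → (Fin n → Option Bool) := fun b i =>
    if h : i.val < n - e then some (b ⟨i.val, h⟩) else none with hX
  have hcard : ∀ b, (Finset.univ.filter (fun i => X b i = none)).card = e := by
    intro b
    have h1 : (Finset.univ.filter (fun i : Fin n => X b i = none)) =
        (Finset.univ.filter (fun i : Fin n => i.val < n - e))ᶜ := by
      ext i
      by_cases h : i.val < n - e <;> simp [X, h]
    rw [h1, Finset.card_compl, card_filter_val_lt n (n - e) (Nat.sub_le n e)]
    simp
    omega
  have hinj : Function.Injective (fun b => enc (X b)) := by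
    intro b b' hbb
    simp only at hbb
    have key : ∀ j : ℕ, ∀ h : j < n - e, b ⟨j, h⟩ = b' ⟨j, h⟩ := by
      intro j
      induction j using Nat.strong_induction_on with
      | _ j ih =>
        intro h
        have hjn : j < n := lt_of_lt_of_le h (Nat.sub_le n e)
        have h1 := hzero (X b) (hcard b) ⟨j, hjn⟩ (b ⟨j, h⟩) (by simp [X, h])
        have h2 := hzero (X b') (hcard b') ⟨j, hjn⟩ (b' ⟨j, h⟩) (by simp [X, h])
        have hpre : (fun k : Fin (⟨j, hjn⟩ : Fin n).val =>
              X b ⟨k.val, k.isLt.trans hjn⟩) =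
            (fun k : Fin (⟨j, hjn⟩ : Fin n).val => X b' ⟨k.val, k.isLt.trans hjn⟩) := by
          funext k
          have hk : k.val < n - e := lt_trans k.isLt h
          simp [X, hk, ih k.val k.isLt hk]
        rw [← h1, ← h2, hbb, hpre]
    funext j
    exact key j.val j.isLt
  calc 2 ^ (n - e) = Fintype.card (Fin (n - e) → Bool) := by simp
    _ ≤ Fintype.card (Fin K) := Fintype.card_le_of_injective _ hinj
    _ = K := by simp
end

section
/- Let H > h > 0 be real numbers, set r = H/h, and let M > 0, ε ≥ 0 be real and K ≥ 1 a natural number. Suppose R and n are real numbers with R ≤ M·H·r^{K−1} + ε·K·r^{K} and n ≥ M·(r^{K} − 1)/(r − 1). Then R/n ≤ (H − h) · (1 + ε·K/(M·h)) / (1 − r^{−K}). -/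
/-- Rate analysis of the feedforward source coder: with `H = H(Q)`, `h = H(Q|X)`,
`r = H/h`, minimum block size `M`, per-block compressor overhead `ε`, and `K`
encoding passes, if the total number of bits `R` and the total number of encoded
samples `n` satisfy the stated bounds, then the rate `R/n` is at most
`(H − h)·(1 + εK/(Mh)) / (1 − r^{−K})`. -/
theorem feedforward_rate_bound
    (H h : ℝ) (hh : 0 < h) (hHh : h < H)
    (r : ℝ) (hr : r = H / h)
    (M ε : ℝ) (hM : 0 < M) (hε : 0 ≤ ε)
    (K : ℕ) (hK : 1 ≤ K)
    (R n : ℝ)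
    (hR : R ≤ M * H * r ^ (K - 1) + ε * (K : ℝ) * r ^ K)
    (hn : n ≥ M * (r ^ K - 1) / (r - 1)) :
    R / n ≤ (H - h) * (1 + ε * (K : ℝ) / (M * h)) / (1 - (r ^ K)⁻¹) := by
  have hr1 : 1 < r := by
    rw [hr]; exact (one_lt_div hh).2 hHh
  have hrK : 1 < r ^ K := one_lt_pow₀ hr1 (by omega)
  have hH : H = r * h := by rw [hr]; field_simp
  have hr0 : (0:ℝ) < r := by linarith
  have hH0 : (0:ℝ) < H := lt_trans hh hHh
  have hpow : r ^ (K - 1) = r ^ K / r := by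
    rw [eq_div_iff (ne_of_gt hr0), ← pow_succ]; congr 1; omega
  have hnb : 0 < M * (r ^ K - 1) / (r - 1) :=
    div_pos (mul_pos hM (by linarith)) (by linarith)
  have hKpos : (0:ℝ) < K := by exact_mod_cast Nat.lt_of_lt_of_le Nat.zero_lt_one hK
  have hRb : (0:ℝ) ≤ M * H * r ^ (K - 1) + ε * (K : ℝ) * r ^ K := by positivity
  have key : R / n ≤ (M * H * r ^ (K - 1) + ε * (K : ℝ) * r ^ K) /
      (M * (r ^ K - 1) / (r - 1)) :=
    div_le_div₀ hRb hR hnb hn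
  refine key.trans_eq ?_
  have hrK0 : r ^ K ≠ 0 := by positivity
  have h2 : r ^ K - 1 ≠ 0 := by nlinarith
  have h3 : r - 1 ≠ 0 := by nlinarith
  rw [hH, hpow]
  field_simp
end
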